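/- For all positive reals a, b, c, the function x ↦ θ(x, b, c) has derivative √(b·c) / ((c+a)·√a·√(a+b+c)) at the point x = a. (This is the partial derivative formula ∂_a c_b^a computed in the proof of Lemma 2.2 of the paper.) -/

import Mathlib

/-- The tangency angle at the center of a sphere of radius `c` subtended by the
centers of spheres of radii `a` and `b`, all three pairwise tangent. -/
noncomputable def theta (a b c : ℝ) : ℝ :=
  Real.arccos (((c + a) ^ 2 + (c + b) ^ 2 - (a + b) ^ 2) / (2 * (c + a) * (c + b)))

theorem hasDerivAt_theta_neighbor (a b c : ℝ) (ha : 0 < a) (hb : 0 < b) (hc : 0 < c) :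
    HasDerivAt (fun x => theta x b c)
      (Real.sqrt (b * c) / ((c + a) * Real.sqrt a * Real.sqrt (a + b + c))) a := by
  have hu : (0:ℝ) < c + a := by linarith
  have hv : (0:ℝ) < c + b := by linarith
  have hD : (2 * (c + a) * (c + b)) ≠ 0 := by positivity
  set f : ℝ → ℝ := fun x => ((c + x) ^ 2 + (c + b) ^ 2 - (x + b) ^ 2) / (2 * (c + x) * (c + b))
    with hfdef
  -- derivative of the inner function
  have hA : HasDerivAt (fun x : ℝ => c + x) 1 a := (hasDerivAt_id a).const_add c
  have hB : HasDerivAt (fun x : ℝ => x + b) 1 a := (hasDerivAt_id a).add_const b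
  have hN := ((hA.pow 2).add_const ((c + b) ^ 2)).sub (hB.pow 2)
  have hDen : HasDerivAt (fun x : ℝ => 2 * (c + x) * (c + b)) ((2 * 1) * (c + b)) a :=
    (hA.const_mul 2).mul_const (c + b)
  have hf : HasDerivAt f (-2 * b * c / ((c + a) ^ 2 * (c + b))) a := by
    have := hN.div hDen hD
    refine this.congr_deriv (Eq.symm ?_)
    simp only [Pi.sub_apply, Pi.pow_apply]
    field_simp
    ring
  have hfa : f a = ((c + a) ^ 2 + (c + b) ^ 2 - (a + b) ^ 2) / (2 * (c + a) * (c + b)) := rfl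
  have h1 : f a ≠ 1 := by
    rw [hfa]
    intro h
    rw [div_eq_iff hD] at h
    nlinarith [sq_nonneg (a - b), mul_pos hb hc]
  have hm1 : f a ≠ -1 := by
    rw [hfa]
    intro h
    rw [div_eq_iff hD] at h
    nlinarith [mul_pos ha hc, mul_pos ha hb]
  have key := (Real.hasDerivAt_arccos hm1 h1).comp a hf
  have hθ : (fun x => theta x b c) = fun x => Real.arccos (f x) := rfl
  rw [hθ]
  refine key.congr_deriv (Eq.symm ?_)
  -- compute √(1 - f a ^ 2)
  have hsq : 1 - f a ^ 2 =
      (2 * Real.sqrt a * Real.sqrt b * Real.sqrt c * Real.sqrt (a + b + c)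
        / ((c + a) * (c + b))) ^ 2 := by
    have sa : Real.sqrt a ^ 2 = a := Real.sq_sqrt ha.le
    have sb : Real.sqrt b ^ 2 = b := Real.sq_sqrt hb.le
    have sc : Real.sqrt c ^ 2 = c := Real.sq_sqrt hc.le
    have sr : Real.sqrt (a + b + c) ^ 2 = a + b + c := Real.sq_sqrt (by linarith)
    have hR : (2 * Real.sqrt a * Real.sqrt b * Real.sqrt c * Real.sqrt (a + b + c)
        / ((c + a) * (c + b))) ^ 2
        = 2 ^ 2 * a * b * c * (a + b + c) / ((c + a) * (c + b)) ^ 2 := by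
      rw [div_pow, mul_pow, mul_pow, mul_pow, mul_pow, sa, sb, sc, sr]
    rw [hfa, hR]
    field_simp
    ring
  rw [hsq, Real.sqrt_sq (by positivity)]
  have sbc : Real.sqrt (b * c) = Real.sqrt b * Real.sqrt c := Real.sqrt_mul hb.le c
  have spa : (0:ℝ) < Real.sqrt a := Real.sqrt_pos.mpr ha
  have spb : (0:ℝ) < Real.sqrt b := Real.sqrt_pos.mpr hb
  have spc : (0:ℝ) < Real.sqrt c := Real.sqrt_pos.mpr hc
  have spr : (0:ℝ) < Real.sqrt (a + b + c) := Real.sqrt_pos.mpr (by linarith)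
  have sb2 : Real.sqrt b * Real.sqrt b = b := Real.mul_self_sqrt hb.le
  have sc2 : Real.sqrt c * Real.sqrt c = c := Real.mul_self_sqrt hc.le
  rw [sbc]
  field_simp
  linear_combination (Real.sqrt c * Real.sqrt c) * sb2 + b * sc2
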